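/- Let n ≥ 3 be an integer. For every nonzero k = (k₁, …, k_{n−1}) ∈ ℤ^{n−1}, one has n·(k₁² + ⋯ + k_{n−1}²) − (k₁ + ⋯ + k_{n−1})² ≥ n − 1. Moreover, the set of k ∈ ℤ^{n−1} for which equality holds has exactly 2n elements. -/

import Mathlib

private lemma sq_ge_one' {a : ℤ} (ha : a ≠ 0) : 1 ≤ a ^ 2 := by
  have h1 : 1 ≤ |a| := Int.one_le_abs ha
  nlinarith [sq_abs a, abs_nonneg a]

private lemma sq_eq_one' {a : ℤ} (ha : a ^ 2 = 1) : a = 1 ∨ a = -1 := by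
  have h2 : (a - 1) * (a + 1) = 0 := by linear_combination ha
  rcases mul_eq_zero.mp h2 with h | h
  · left; linarith
  · right; linarith

private lemma sumsq_ident (m : ℕ) (k : Fin m → ℤ) :
    (∑ i, ∑ j, (k i - k j)^2) = 2 * ((m : ℤ) * ∑ i, (k i)^2 - (∑ i, k i)^2) := by
  simp only [sub_sq, Finset.sum_add_distrib, Finset.sum_sub_distrib,
    Finset.sum_const, Finset.card_univ, Fintype.card_fin, ← Finset.sum_mul,
    ← Finset.mul_sum, nsmul_eq_mul]
  ring

private lemma split_ident (m : ℕ) (k : Fin m → ℤ) :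
    (∑ i, ∑ j, (k i - k j)^2)
      = (∑ i ∈ Finset.univ.filter (fun i => k i ≠ 0),
          ∑ j ∈ Finset.univ.filter (fun i => k i ≠ 0), (k i - k j)^2)
        + 2 * ((m : ℤ) - (Finset.univ.filter (fun i => k i ≠ 0)).card)
          * ∑ i ∈ Finset.univ.filter (fun i => k i ≠ 0), (k i)^2 := by
  set B := Finset.univ.filter (fun i => k i ≠ 0) with hB
  set A := Finset.univ.filter (fun i => ¬ k i ≠ 0) with hA
  have hsplit : ∀ f : Fin m → ℤ, (∑ i, f i) = (∑ i ∈ B, f i) + ∑ i ∈ A, f i :=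
    fun f => (Finset.sum_filter_add_sum_filter_not _ _ f).symm
  have hA0 : ∀ i ∈ A, k i = 0 := by
    intro i hi; simpa using (Finset.mem_filter.mp hi).2
  have hcard : A.card = m - B.card ∧ B.card ≤ m := by
    have h := Finset.card_filter_add_card_filter_not
      (s := (Finset.univ : Finset (Fin m))) (p := fun i => k i ≠ 0)
    rw [← hB, ← hA, Finset.card_univ, Fintype.card_fin] at h
    omega
  have hT : (∑ i, (k i)^2) = ∑ i ∈ B, (k i)^2 := by
    rw [hsplit]
    have : ∑ i ∈ A, (k i)^2 = 0 := Finset.sum_eq_zero (fun i hi => by rw [hA0 i hi]; ring)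
    rw [this, add_zero]
  rw [hsplit]
  have h1 : ∀ i ∈ A, (∑ j, (k i - k j)^2) = ∑ j ∈ B, (k j)^2 := by
    intro i hi
    rw [← hT]
    exact Finset.sum_congr rfl (fun j _ => by rw [hA0 i hi]; ring)
  rw [Finset.sum_congr rfl h1, Finset.sum_const, hcard.1]
  have h2 : ∀ i ∈ B, (∑ j, (k i - k j)^2)
      = (∑ j ∈ B, (k i - k j)^2) + ((m : ℤ) - B.card) * (k i)^2 := by
    intro i _
    rw [hsplit (fun j => (k i - k j)^2)]
    congr 1
    have : ∀ j ∈ A, (k i - k j)^2 = (k i)^2 := fun j hj => by rw [hA0 j hj]; ring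
    rw [Finset.sum_congr rfl this, Finset.sum_const, hcard.1, nsmul_eq_mul,
      Nat.cast_sub hcard.2]
  rw [Finset.sum_congr rfl h2, Finset.sum_add_distrib, ← Finset.mul_sum, nsmul_eq_mul,
    Nat.cast_sub hcard.2]
  ring

private lemma q_main (m : ℕ) (hm : 2 ≤ m) (k : Fin m → ℤ) (hk : k ≠ 0) :
    ((m : ℤ) + 1) * (∑ i, (k i)^2) - (∑ i, k i)^2 ≥ m ∧
    (((m : ℤ) + 1) * (∑ i, (k i)^2) - (∑ i, k i)^2 = m →
      (∃ i, k = Pi.single i 1 ∨ k = Pi.single i (-1)) ∨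
        k = (fun _ => 1) ∨ k = (fun _ => -1)) := by
  set B := Finset.univ.filter (fun i => k i ≠ 0) with hB
  set b : ℕ := B.card with hbdef
  set T : ℤ := ∑ i ∈ B, (k i)^2 with hTdef
  set D : ℤ := ∑ i ∈ B, ∑ j ∈ B, (k i - k j)^2 with hDdef
  have hBmem : ∀ i, i ∈ B ↔ k i ≠ 0 := by intro i; simp [hB]
  have hBne : B.Nonempty := by
    obtain ⟨i, hi⟩ := Function.ne_iff.mp hk
    exact ⟨i, (hBmem i).mpr hi⟩
  have hb1 : 1 ≤ b := Finset.card_pos.mpr hBne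
  have hbm : b ≤ m := by
    have := Finset.card_le_univ B
    simpa [Finset.card_univ] using this
  have hb1' : (1 : ℤ) ≤ b := by exact_mod_cast hb1
  have hbm' : (b : ℤ) ≤ m := by exact_mod_cast hbm
  have hTb : (b : ℤ) ≤ T := by
    rw [hTdef]
    calc (b : ℤ) = ∑ _i ∈ B, (1 : ℤ) := by simp [hbdef]
    _ ≤ ∑ i ∈ B, (k i)^2 :=
        Finset.sum_le_sum (fun i hi => sq_ge_one' ((hBmem i).mp hi))
  have hD0 : 0 ≤ D :=
    Finset.sum_nonneg (fun i _ => Finset.sum_nonneg (fun j _ => sq_nonneg _))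
  have hT : (∑ i, (k i)^2) = T := by
    rw [hTdef]
    refine (Finset.sum_subset (Finset.filter_subset _ _) ?_).symm
    intro x _ hx
    simp only [hB, Finset.mem_filter, Finset.mem_univ, true_and, not_not] at hx
    rw [hx]; ring
  have hident : 2 * (((m : ℤ) + 1) * (∑ i, (k i)^2) - (∑ i, k i)^2)
      = D + 2 * ((m : ℤ) + 1 - b) * T := by
    have h1 := sumsq_ident m k
    have h2 := split_ident m k
    rw [← hB] at h2
    rw [← hbdef, ← hTdef, ← hDdef] at h2
    rw [hT] at h1 ⊢
    linarith [h1, h2]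
  have hkey : (m : ℤ) ≤ ((m : ℤ) + 1 - b) * b := by nlinarith
  have hmono : ((m : ℤ) + 1 - b) * b ≤ ((m : ℤ) + 1 - b) * T :=
    mul_le_mul_of_nonneg_left hTb (by linarith)
  constructor
  · nlinarith
  · intro hQ
    rw [hQ] at hident
    have hDz : D = 0 := by nlinarith
    have hTm : ((m : ℤ) + 1 - b) * T = m := by linarith
    have hbm2 : ((m : ℤ) + 1 - b) * b = m := by nlinarith
    have hTb2 : T = b := by
      have hpos : ((m : ℤ) + 1 - b) ≠ 0 := by
        intro h; rw [h] at hbm2; simp at hbm2; omega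
      exact mul_left_cancel₀ hpos (by rw [hTm, hbm2])
    have hcase : (b : ℤ) = 1 ∨ (b : ℤ) = m := by
      have : ((b : ℤ) - 1) * ((m : ℤ) - b) = 0 := by nlinarith
      rcases mul_eq_zero.mp this with h | h
      · left; linarith
      · right; linarith
    have hsq1 : ∀ i ∈ B, (k i)^2 = 1 := by
      have hz : ∑ i ∈ B, ((k i)^2 - 1) = 0 := by
        rw [Finset.sum_sub_distrib, ← hTdef, Finset.sum_const, nsmul_eq_mul, mul_one,
          hTb2, ← hbdef]
        ring
      intro i hi
      have := (Finset.sum_eq_zero_iff_of_nonneg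
        (fun j hj => by linarith [sq_ge_one' ((hBmem j).mp hj)])).mp hz i hi
      linarith
    have heqB : ∀ i ∈ B, ∀ j ∈ B, k i = k j := by
      intro i hi j hj
      have h1 := (Finset.sum_eq_zero_iff_of_nonneg
        (fun i _ => Finset.sum_nonneg (fun j _ => sq_nonneg (k i - k j)))).mp hDz i hi
      have h2 := (Finset.sum_eq_zero_iff_of_nonneg
        (fun j _ => sq_nonneg (k i - k j))).mp h1 j hj
      have := pow_eq_zero_iff (n := 2) (by norm_num) |>.mp h2
      linarith [sub_eq_zero.mp this]
    rcases hcase with hc | hc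
    · have : B.card = 1 := by rw [← hbdef]; exact_mod_cast hc
      obtain ⟨i₀, hB1⟩ := Finset.card_eq_one.mp this
      have hi₀B : i₀ ∈ B := by rw [hB1]; exact Finset.mem_singleton_self i₀
      have hksingle : k = Pi.single i₀ (k i₀) := by
        funext j
        by_cases hj : j = i₀
        · subst hj; simp
        · have hjB : j ∉ B := by rw [hB1]; simpa using hj
          have : k j = 0 := by by_contra h; exact hjB ((hBmem j).mpr h)
          rw [this, Pi.single_eq_of_ne hj]
      left
      refine ⟨i₀, ?_⟩
      rcases sq_eq_one' (hsq1 i₀ hi₀B) with h | h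
      · left; rw [hksingle, h]
      · right; rw [hksingle, h]
    · have hcard : B.card = m := by rw [← hbdef]; exact_mod_cast hc
      have hBuniv : B = Finset.univ := Finset.eq_univ_of_card B (by simpa [Finset.card_univ])
      have hall : ∀ i, i ∈ B := fun i => hBuniv ▸ Finset.mem_univ i
      have i₀ : Fin m := ⟨0, by omega⟩
      rcases sq_eq_one' (hsq1 i₀ (hall i₀)) with h | h
      · right; left; funext j; rw [heqB j (hall j) i₀ (hall i₀), h]
      · right; right; funext j; rw [heqB j (hall j) i₀ (hall i₀), h]

private lemma q_single (m : ℕ) (i : Fin m) (s : ℤ) (hs : s^2 = 1) :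
    ((m : ℤ) + 1) * (∑ j, ((Pi.single i s : Fin m → ℤ) j)^2)
      - (∑ j, (Pi.single i s : Fin m → ℤ) j)^2 = m := by
  have h1 : (∑ j, ((Pi.single i s : Fin m → ℤ) j)^2) = s^2 := by
    simp [Pi.single_apply, apply_ite (·^2)]
  have h2 : (∑ j, (Pi.single i s : Fin m → ℤ) j) = s := by
    simp [Pi.single_apply]
  rw [h1, h2, hs]; ring

private lemma q_const (m : ℕ) (s : ℤ) (hs : s^2 = 1) :
    ((m : ℤ) + 1) * (∑ _j : Fin m, s^2) - (∑ _j : Fin m, s)^2 = m := by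
  simp only [Finset.sum_const, Finset.card_univ, Fintype.card_fin, nsmul_eq_mul]
  nlinarith [hs]

private def eqF (m : ℕ) : Finset (Fin m → ℤ) :=
  ((Finset.univ.image fun i => (Pi.single i 1 : Fin m → ℤ)) ∪
   (Finset.univ.image fun i => (Pi.single i (-1) : Fin m → ℤ))) ∪
  {fun _ => 1, fun _ => -1}

private lemma single_inj (m : ℕ) (c : ℤ) (hc : c ≠ 0) :
    Function.Injective (fun i : Fin m => (Pi.single i c : Fin m → ℤ)) := by
  intro i j h
  by_contra hij
  have h2 := congrFun h i
  simp [Pi.single_apply, hij] at h2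
  exact hc h2

private lemma card_eqF (m : ℕ) (hm : 2 ≤ m) : (eqF m).card = 2 * m + 2 := by
  have hone : (1 : ℤ) ≠ 0 := one_ne_zero
  have hcardFin : 1 < Fintype.card (Fin m) := by simp; omega
  have hc1 : (Finset.univ.image fun i => (Pi.single i 1 : Fin m → ℤ)).card = m := by
    rw [Finset.card_image_of_injective _ (single_inj m 1 hone)]
    simp
  have hc2 : (Finset.univ.image fun i => (Pi.single i (-1) : Fin m → ℤ)).card = m := by
    rw [Finset.card_image_of_injective _ (single_inj m (-1) (by norm_num))]
    simp
  have hd12 : Disjoint (Finset.univ.image fun i => (Pi.single i 1 : Fin m → ℤ))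
      (Finset.univ.image fun i => (Pi.single i (-1) : Fin m → ℤ)) := by
    rw [Finset.disjoint_left]
    intro a ha1 ha2
    obtain ⟨i, _, hi⟩ := Finset.mem_image.mp ha1
    obtain ⟨j, _, hj⟩ := Finset.mem_image.mp ha2
    have := congrFun (hi.trans hj.symm) i
    rw [Pi.single_eq_same, Pi.single_apply] at this
    by_cases h : i = j <;> simp [h] at this
  have hnec : ((fun _ => 1 : Fin m → ℤ)) ≠ (fun _ => -1) := by
    intro h
    have := congrFun h ⟨0, by omega⟩
    norm_num at this
  have hdU : Disjoint ((Finset.univ.image fun i => (Pi.single i 1 : Fin m → ℤ)) ∪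
      (Finset.univ.image fun i => (Pi.single i (-1) : Fin m → ℤ)))
      ({fun _ => 1, fun _ => -1} : Finset (Fin m → ℤ)) := by
    rw [Finset.disjoint_left]
    intro a ha1 ha2
    have hsingle : ∃ i : Fin m, ∃ c : ℤ, (c = 1 ∨ c = -1) ∧ a = Pi.single i c := by
      rcases Finset.mem_union.mp ha1 with h | h
      · obtain ⟨i, _, hi⟩ := Finset.mem_image.mp h
        exact ⟨i, 1, Or.inl rfl, hi.symm⟩
      · obtain ⟨i, _, hi⟩ := Finset.mem_image.mp h
        exact ⟨i, -1, Or.inr rfl, hi.symm⟩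
    obtain ⟨i, c, hc, rfl⟩ := hsingle
    obtain ⟨j, hj⟩ := Fintype.exists_ne_of_one_lt_card hcardFin i
    rcases Finset.mem_insert.mp ha2 with h | h
    · have := congrFun h j
      rw [Pi.single_eq_of_ne hj] at this
      norm_num at this
    · have := congrFun (Finset.mem_singleton.mp h) j
      rw [Pi.single_eq_of_ne hj] at this
      norm_num at this
  rw [eqF, Finset.card_union_of_disjoint hdU, Finset.card_union_of_disjoint hd12,
    hc1, hc2, Finset.card_pair hnec]
  ring

private lemma eqset_eq (m : ℕ) (hm : 2 ≤ m) :
    {k : Fin m → ℤ | ((m : ℤ) + 1) * (∑ i, (k i)^2) - (∑ i, k i)^2 = m}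
      = ↑(eqF m) := by
  ext k
  simp only [Set.mem_setOf_eq, eqF, Finset.mem_coe, Finset.mem_union,
    Finset.mem_image, Finset.mem_univ, true_and, Finset.mem_insert,
    Finset.mem_singleton]
  constructor
  · intro h
    have hk : k ≠ 0 := by
      rintro rfl
      simp only [Pi.zero_apply, ne_eq, OfNat.ofNat_ne_zero, not_false_eq_true,
        zero_pow, Finset.sum_const_zero, mul_zero, zero_sub, neg_zero] at h
      have : (m : ℤ) = 0 := h.symm
      omega
    rcases (q_main m hm k hk).2 h with ⟨i, hi | hi⟩ | h1 | h1
    · exact Or.inl (Or.inl ⟨i, hi.symm⟩)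
    · exact Or.inl (Or.inr ⟨i, hi.symm⟩)
    · exact Or.inr (Or.inl h1)
    · exact Or.inr (Or.inr h1)
  · rintro ((⟨i, rfl⟩ | ⟨i, rfl⟩) | rfl | rfl)
    · exact q_single m i 1 (by norm_num)
    · exact q_single m i (-1) (by norm_num)
    · exact q_const m 1 (by norm_num)
    · exact q_const m (-1) (by norm_num)

/-- for `n ≥ 3`, the quadratic form `Q_n(k) = n·Σkᵢ² − (Σkᵢ)²` on `ℤ^{n−1}`
is `≥ n − 1` on nonzero vectors, with equality attained on exactly `2n` vectors. -/
theorem stmt_7 (n : ℕ) (hn : 3 ≤ n) :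
    (∀ k : Fin (n - 1) → ℤ, k ≠ 0 →
      (n : ℤ) * (∑ i, (k i) ^ 2) - (∑ i, k i) ^ 2 ≥ (n : ℤ) - 1) ∧
    {k : Fin (n - 1) → ℤ |
      (n : ℤ) * (∑ i, (k i) ^ 2) - (∑ i, k i) ^ 2 = (n : ℤ) - 1}.ncard = 2 * n := by
  set m := n - 1 with hmdef
  have hm : 2 ≤ m := by omega
  have h1 : (n : ℤ) - 1 = (m : ℤ) := by
    have : n = m + 1 := by omega
    rw [this]; push_cast; ring
  have h2 : (n : ℤ) = (m : ℤ) + 1 := by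
    have : n = m + 1 := by omega
    rw [this]; push_cast; ring
  rw [h1, h2]
  constructor
  · intro k hk
    exact (q_main m hm k hk).1
  · rw [eqset_eq m hm, Set.ncard_coe_finset, card_eqF m hm]
    omega
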